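/- Let Ω = (U,Ξ) be a unimodular system with |Ξ| = N and let L_Ω = Φ(U) ∩ ℤ^N be the associated lattice in ℝ^N with its standard inner product. Then the discriminant of L_Ω (the determinant of the Gram matrix of any ℤ-basis) equals the complexity c(Ω), the number of maximal linearly independent subsets of Ξ. -/

import Mathlib

/-- `S` is a maximal linearly independent subset of the family of forms `ξ`. -/
def MaxLinIndep {ι : Type*} {U : Type*} [AddCommGroup U] [Module ℝ U]
    (ξ : ι → Module.Dual ℝ U) (S : Set ι) : Prop :=
  LinearIndependent ℝ (fun i : S => ξ i) ∧
    ∀ T : Set ι, S ⊆ T → LinearIndependent ℝ (fun i : T => ξ i) → T = S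

/-- A unimodular system: nonzero forms spanning `U*` such that every maximal linearly
independent subset generates the same abelian group `M` over `ℤ`. -/
def IsUnimodularSystem {ι : Type*} {U : Type*} [AddCommGroup U] [Module ℝ U]
    (ξ : ι → Module.Dual ℝ U) (M : Submodule ℤ (Module.Dual ℝ U)) : Prop :=
  (∀ k, ξ k ≠ 0) ∧ Submodule.span ℝ (Set.range ξ) = ⊤ ∧
    ∀ S : Set ι, MaxLinIndep ξ S → Submodule.span ℤ (ξ '' S) = M

/-- The `ℤ`-submodule of integer points of `ι → ℝ`. -/
def intPts (ι : Type*) : Submodule ℤ (ι → ℝ) where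
  carrier := {x | ∀ k, ∃ z : ℤ, x k = z}
  zero_mem' := fun k => ⟨0, by simp⟩
  add_mem' := by
    rintro a b ha hb k
    obtain ⟨z, hz⟩ := ha k; obtain ⟨w, hw⟩ := hb k
    exact ⟨z + w, by simp [hz, hw]⟩
  smul_mem' := by
    rintro c a ha k
    obtain ⟨z, hz⟩ := ha k
    exact ⟨c * z, by simp [hz, zsmul_eq_mul]⟩

/-- The evaluation map `Φ : U → ℝᴺ`, `Φ(u) = (ξ₁(u), …, ξ_N(u))`. -/
noncomputable def PhiMap {N : ℕ} {U : Type*} [AddCommGroup U] [Module ℝ U]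
    (ξ : Fin N → Module.Dual ℝ U) : U →ₗ[ℝ] (Fin N → ℝ) :=
  LinearMap.pi fun k => ξ k

section CauchyBinet

open Finset Matrix

variable {n N : ℕ}

lemma step1 (A B : Matrix (Fin n) (Fin N) ℝ) :
    (A * Bᵀ).det = ∑ g : Fin n → Fin N, (∏ i, A i (g i)) * (B.submatrix id g).det := by
  set f := (Matrix.detRowAlternating : (Fin n → ℝ) [⋀^Fin n]→ₗ[ℝ] ℝ).toMultilinearMap with hf
  have h1 : (A * Bᵀ).det = f (fun i => ∑ k : Fin N, A i k • (fun j => B j k)) := by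
    show (A * Bᵀ).det = Matrix.detRowAlternating _
    congr 1
    ext i j
    simp [Matrix.mul_apply, Matrix.transpose_apply]
  rw [h1, f.map_sum]
  refine Finset.sum_congr rfl fun g _ => ?_
  rw [f.map_smul_univ (fun i => A i (g i)) (fun i => (fun j => B j (g i)))]
  rw [smul_eq_mul]
  congr 1
  show Matrix.detRowAlternating ((Bᵀ).submatrix g id) = _
  show ((Bᵀ).submatrix g id).det = _
  rw [← Matrix.det_transpose, Matrix.transpose_submatrix, Matrix.transpose_transpose]

/-- monotone enumeration of a card-n subset -/
noncomputable def menum (p : {s : Finset (Fin N) // s.card = n}) : Fin n → Fin N :=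
  fun i => (p.1.orderIsoOfFin p.2 i : Fin N)

lemma menum_injective (p : {s : Finset (Fin N) // s.card = n}) : Function.Injective (menum p) := by
  intro a b h
  exact (p.1.orderIsoOfFin p.2).injective (Subtype.ext h)

lemma menum_mem (p : {s : Finset (Fin N) // s.card = n}) (i : Fin n) : menum p i ∈ p.1 :=
  (p.1.orderIsoOfFin p.2 i).2

lemma menum_image (p : {s : Finset (Fin N) // s.card = n}) :
    Finset.image (menum p) Finset.univ = p.1 := by
  apply Finset.eq_of_subset_of_card_le
  · intro x hx
    simp only [Finset.mem_image] at hx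
    obtain ⟨i, _, rfl⟩ := hx
    exact menum_mem p i
  · rw [Finset.card_image_of_injective _ (menum_injective p), Finset.card_univ,
      Fintype.card_fin, p.2]

lemma det_sum_perm (M : Matrix (Fin n) (Fin n) ℝ) :
    ∑ σ : Equiv.Perm (Fin n), ((Equiv.Perm.sign σ : ℤ) : ℝ) * ∏ i, M i (σ i) = M.det := by
  rw [← Matrix.det_transpose, Matrix.det_apply']
  simp [Matrix.transpose_apply]

lemma cauchyBinet (A B : Matrix (Fin n) (Fin N) ℝ) :
    (A * Bᵀ).det = ∑ p : {s : Finset (Fin N) // s.card = n},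
      (A.submatrix id (menum p)).det * (B.submatrix id (menum p)).det := by
  classical
  rw [step1]
  have him : ∀ (s : {s : Finset (Fin N) // s.card = n}) (σ : Equiv.Perm (Fin n)),
      Finset.image (menum s ∘ σ) Finset.univ = s.1 := by
    intro s σ
    rw [← Finset.image_image, Finset.image_univ_equiv, menum_image]
  have h2 : ∑ g : Fin n → Fin N, (∏ i, A i (g i)) * (B.submatrix id g).det
      = ∑ g ∈ Finset.univ.filter (fun g : Fin n → Fin N => Function.Injective g),
          (∏ i, A i (g i)) * (B.submatrix id g).det := by
    refine (Finset.sum_subset (Finset.filter_subset _ _) fun g _ hg => ?_).symm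
    simp only [Finset.mem_filter, Finset.mem_univ, true_and] at hg
    rw [Function.not_injective_iff] at hg
    obtain ⟨a, b, hab, hne⟩ := hg
    have : (B.submatrix id g).det = 0 := by
      rw [← Matrix.det_transpose, Matrix.transpose_submatrix]
      exact Matrix.det_zero_of_row_eq hne (by ext j; simp [hab])
    rw [this, mul_zero]
  rw [h2]
  have h3 : ∑ g ∈ Finset.univ.filter (fun g : Fin n → Fin N => Function.Injective g),
        (∏ i, A i (g i)) * (B.submatrix id g).det
      = ∑ q : {s : Finset (Fin N) // s.card = n} × Equiv.Perm (Fin n),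
          (∏ i, A i ((menum q.1 ∘ q.2) i)) * (B.submatrix id (menum q.1 ∘ q.2)).det := by
    refine (Finset.sum_bij (fun (q : {s : Finset (Fin N) // s.card = n} × Equiv.Perm (Fin n))
        (_ : q ∈ Finset.univ) => menum q.1 ∘ q.2) ?_ ?_ ?_ ?_).symm
    · intro q _
      simp only [Finset.mem_filter, Finset.mem_univ, true_and]
      exact (menum_injective q.1).comp q.2.injective
    · intro p hp q hq h
      obtain ⟨s, σ⟩ := p
      obtain ⟨s', σ'⟩ := q
      simp only [] at h
      have hs : s = s' := by
        apply Subtype.ext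
        rw [← him s σ, ← him s' σ', h]
      subst hs
      have hσ : σ = σ' := by
        apply Equiv.ext
        intro i
        exact menum_injective s (congrFun h i)
      rw [hσ]
    · intro g hg
      simp only [Finset.mem_filter, Finset.mem_univ, true_and] at hg
      set s0 : Finset (Fin N) := Finset.image g Finset.univ with hs0
      have hcard : s0.card = n := by
        rw [hs0, Finset.card_image_of_injective _ hg, Finset.card_univ, Fintype.card_fin]
      have hmem : ∀ i, g i ∈ s0 := fun i => Finset.mem_image_of_mem g (Finset.mem_univ i)
      set e : Fin n → Fin n := fun i => (s0.orderIsoOfFin hcard).symm ⟨g i, hmem i⟩ with he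
      have einj : Function.Injective e := by
        intro a b hab
        apply hg
        have := congrArg (fun x => ((s0.orderIsoOfFin hcard) x : Fin N)) hab
        simpa [he] using this
      refine ⟨⟨⟨s0, hcard⟩, Equiv.ofBijective e (Finite.injective_iff_bijective.mp einj)⟩,
        Finset.mem_univ _, ?_⟩
      funext i
      show menum ⟨s0, hcard⟩ (e i) = g i
      simp [menum, he]
    · intro q _; rfl
  rw [h3, Fintype.sum_prod_type]
  refine Finset.sum_congr rfl fun s _ => ?_
  have key : ∀ σ : Equiv.Perm (Fin n),
      (∏ i, A i ((menum s ∘ σ) i)) * (B.submatrix id (menum s ∘ σ)).det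
      = (((Equiv.Perm.sign σ : ℤ) : ℝ) * ∏ i, (A.submatrix id (menum s)) i (σ i))
          * (B.submatrix id (menum s)).det := by
    intro σ
    have hB : (B.submatrix id (menum s ∘ σ)).det
        = ((Equiv.Perm.sign σ : ℤ) : ℝ) * (B.submatrix id (menum s)).det := by
      have : B.submatrix id (menum s ∘ σ) = (B.submatrix id (menum s)).submatrix id σ := by
        ext i j; rfl
      rw [this, Matrix.det_permute']
    rw [hB]
    simp only [Matrix.submatrix_apply, id_eq, Function.comp_apply]
    ring
  simp_rw [key]
  rw [← Finset.sum_mul]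
  rw [det_sum_perm]

end CauchyBinet

section LinAlg

variable {N n : ℕ} {U : Type*} [AddCommGroup U] [Module ℝ U]

lemma exists_maxLinIndep_ext (ξ : Fin N → Module.Dual ℝ U) (s₀ : Finset (Fin N))
    (h₀ : LinearIndependent ℝ (fun i : ((s₀ : Set (Fin N))) => ξ i)) :
    ∃ S : Set (Fin N), ↑s₀ ⊆ S ∧ MaxLinIndep ξ S := by
  classical
  set P : Finset (Fin N) → Prop := fun t =>
    s₀ ⊆ t ∧ LinearIndependent ℝ (fun i : ((t : Set (Fin N))) => ξ i) with hP
  have hne : (Finset.univ.filter P).Nonempty :=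
    ⟨s₀, by simp only [Finset.mem_filter, Finset.mem_univ, true_and, hP]
            exact ⟨Finset.Subset.refl _, h₀⟩⟩
  obtain ⟨t, ht, hmax⟩ := Finset.exists_max_image (Finset.univ.filter P) Finset.card hne
  simp only [Finset.mem_filter, Finset.mem_univ, true_and, hP] at ht
  refine ⟨↑t, Finset.coe_subset.mpr ht.1, ht.2, fun T hsub hTind => ?_⟩
  have hfin : T.Finite := Set.toFinite T
  have h1 : LinearIndependent ℝ (fun i : ((hfin.toFinset : Set (Fin N))) => ξ i) := by
    rw [Set.Finite.coe_toFinset]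
    exact hTind
  have hsub' : t ⊆ hfin.toFinset := by
    intro x hx
    rw [Set.Finite.mem_toFinset]
    exact hsub hx
  have hcard : hfin.toFinset.card ≤ t.card := by
    apply hmax
    simp only [Finset.mem_filter, Finset.mem_univ, true_and, hP]
    exact ⟨ht.1.trans hsub', h1⟩
  have heq : hfin.toFinset = t := (Finset.eq_of_subset_of_card_le hsub' hcard).symm
  calc T = ↑hfin.toFinset := (Set.Finite.coe_toFinset hfin).symm
    _ = ↑t := by rw [heq]

lemma xi_mem_M (ξ : Fin N → Module.Dual ℝ U) (M : Submodule ℤ (Module.Dual ℝ U))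
    (hsys : IsUnimodularSystem ξ M) (k : Fin N) : ξ k ∈ M := by
  classical
  have h1 : LinearIndependent ℝ (fun i : (({k} : Finset (Fin N)) : Set (Fin N)) => ξ i) := by
    rw [Finset.coe_singleton]
    exact LinearIndepOn.singleton (hsys.1 k)
  obtain ⟨S, hS1, hS2⟩ := exists_maxLinIndep_ext ξ {k} h1
  rw [← hsys.2.2 S hS2]
  exact Submodule.subset_span ⟨k, hS1 (by simp), rfl⟩

variable [FiniteDimensional ℝ U]

lemma phi_injective (ξ : Fin N → Module.Dual ℝ U)
    (hspan : Submodule.span ℝ (Set.range ξ) = ⊤) : Function.Injective (PhiMap ξ) := by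
  rw [← LinearMap.ker_eq_bot, eq_bot_iff]
  intro v hv
  simp only [LinearMap.mem_ker] at hv
  have hv' : ∀ k, ξ k v = 0 := fun k => congrFun hv k
  have hall : ∀ φ : Module.Dual ℝ U, φ v = 0 := by
    intro φ
    have hφ : φ ∈ Submodule.span ℝ (Set.range ξ) := by rw [hspan]; trivial
    refine Submodule.span_induction ?_ ?_ ?_ ?_ hφ
    · rintro _ ⟨k, rfl⟩; exact hv' k
    · simp
    · intro a b _ _ ha hb
      simp [LinearMap.add_apply, ha, hb]
    · intro a x _ hx
      simp [LinearMap.smul_apply, hx]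
  have := (Module.forall_dual_apply_eq_zero_iff ℝ v).mp hall
  simp [this]

lemma maximal_spans (ξ : Fin N → Module.Dual ℝ U)
    (hspan : Submodule.span ℝ (Set.range ξ) = ⊤) {S : Set (Fin N)}
    (hS : MaxLinIndep ξ S) : Submodule.span ℝ (ξ '' S) = ⊤ := by
  by_contra hne
  have hex : ∃ k, ξ k ∉ Submodule.span ℝ (ξ '' S) := by
    by_contra hall
    push_neg at hall
    apply hne
    rw [eq_top_iff, ← hspan]
    apply Submodule.span_le.mpr
    rintro _ ⟨k, rfl⟩
    exact hall k
  obtain ⟨k, hk⟩ := hex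
  have hkS : k ∉ S := fun h => hk (Submodule.subset_span ⟨k, h, rfl⟩)
  have hinjS : Set.InjOn ξ S := by
    intro a ha b hb hab
    have := hS.1.injective
      (show ξ (((⟨a, ha⟩ : S) : Fin N)) = ξ (((⟨b, hb⟩ : S) : Fin N)) from hab)
    exact congrArg Subtype.val this
  have hinj' : Set.InjOn ξ (insert k S) := by
    intro a ha b hb hab
    rcases ha with rfl | ha
    · rcases hb with rfl | hb
      · rfl
      · exact absurd (hab ▸ Submodule.subset_span ⟨b, hb, rfl⟩) hk
    · rcases hb with rfl | hb
      · exact absurd (hab ▸ Submodule.subset_span ⟨a, ha, rfl⟩) hk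
      · exact hinjS ha hb hab
  have himg : LinearIndependent ℝ (fun x : (ξ '' S) => (x : Module.Dual ℝ U)) := LinearIndepOn.id_image hS.1
  have hins : LinearIndependent ℝ
      (fun x : (insert (ξ k) (ξ '' S) : Set (Module.Dual ℝ U)) => (x : Module.Dual ℝ U)) :=
    LinearIndepOn.id_insert himg hk
  have hindep : LinearIndependent ℝ (fun i : (insert k S : Set (Fin N)) => ξ i) := by
    show LinearIndepOn ℝ ξ (insert k S)
    rw [linearIndepOn_iff_image hinj', Set.image_insert_eq]
    exact hins
  have := hS.2 (insert k S) (Set.subset_insert k S) hindep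
  exact hkS (this ▸ Set.mem_insert k S)

lemma maximal_ncard (hU : Module.finrank ℝ U = n) (ξ : Fin N → Module.Dual ℝ U)
    (hspan : Submodule.span ℝ (Set.range ξ) = ⊤) {S : Set (Fin N)}
    (hS : MaxLinIndep ξ S) : S.ncard = n := by
  classical
  have hfin : S.Finite := Set.toFinite S
  haveI := hfin.fintype
  have hsp := maximal_spans ξ hspan hS
  let B : Module.Basis S ℝ (Module.Dual ℝ U) := Module.Basis.mk hS.1 (by
    rw [← Set.image_eq_range, hsp])
  have hc := Module.finrank_eq_card_basis B
  rw [Subspace.dual_finrank_eq, hU] at hc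
  rw [← Nat.card_coe_set_eq, Nat.card_eq_fintype_card, ← hc]

lemma card_indep_maximal (hU : Module.finrank ℝ U = n) (ξ : Fin N → Module.Dual ℝ U)
    {s : Finset (Fin N)} (hcard : s.card = n)
    (hind : LinearIndependent ℝ (fun i : ((s : Set (Fin N))) => ξ i)) :
    MaxLinIndep ξ (s : Set (Fin N)) := by
  classical
  refine ⟨hind, fun T hsub hT => ?_⟩
  have hfin : T.Finite := Set.toFinite T
  haveI : Fintype T := hfin.fintype
  have hle : Fintype.card T ≤ n := by
    have := hT.fintype_card_le_finrank
    rwa [Subspace.dual_finrank_eq, hU] at this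
  have hsub' : s ⊆ hfin.toFinset := by
    intro x hx
    rw [Set.Finite.mem_toFinset]
    exact hsub hx
  have h2 : hfin.toFinset.card = Fintype.card T := by
    rw [← Set.ncard_eq_toFinset_card T hfin, ← Nat.card_coe_set_eq,
      Nat.card_eq_fintype_card]
  have hcard' : hfin.toFinset.card ≤ s.card := by omega
  have heq : hfin.toFinset = s := (Finset.eq_of_subset_of_card_le hsub' hcard').symm
  calc T = ↑hfin.toFinset := (Set.Finite.coe_toFinset hfin).symm
    _ = ↑s := by rw [heq]

end LinAlg

set_option maxHeartbeats 1000000 in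
/-- The discriminant of the lattice `L_Ω = Φ(U) ∩ ℤᴺ` (the Gram determinant of any
`ℤ`-basis with respect to the standard inner product of `ℝᴺ`) equals the complexity of
the unimodular system, i.e. the number of maximal linearly independent subsets of `Ξ`. -/
theorem stmt11 {N n : ℕ} {U : Type*} [AddCommGroup U] [Module ℝ U] [FiniteDimensional ℝ U]
    (hU : Module.finrank ℝ U = n)
    (ξ : Fin N → Module.Dual ℝ U) (M : Submodule ℤ (Module.Dual ℝ U))
    (hsys : IsUnimodularSystem ξ M)
    (b : Module.Basis (Fin n)
      ℤ ((LinearMap.range (PhiMap ξ)).restrictScalars ℤ ⊓ intPts (Fin N) :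
          Submodule ℤ (Fin N → ℝ))) :
    (Matrix.of fun i j : Fin n =>
        ∑ k : Fin N, ((b i : Fin N → ℝ) k) * ((b j : Fin N → ℝ) k)).det =
      (Set.ncard {S : Set (Fin N) | MaxLinIndep ξ S} : ℝ) := by
  classical
  obtain ⟨hne0, hspan, hgen⟩ := hsys
  have hΦinj : Function.Injective (PhiMap ξ) := phi_injective ξ hspan
  -- choose preimages of the basis vectors
  have hmem : ∀ i, (b i : Fin N → ℝ) ∈
      ((LinearMap.range (PhiMap ξ)).restrictScalars ℤ ⊓ intPts (Fin N) :
        Submodule ℤ (Fin N → ℝ)) := fun i => (b i).2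
  have hmem1 : ∀ i, ∃ v : U, PhiMap ξ v = (b i : Fin N → ℝ) := by
    intro i
    have := (Submodule.mem_inf.mp (hmem i)).1
    exact this
  choose u hu using hmem1
  have hint : ∀ (i : Fin n) (k : Fin N), ∃ z : ℤ, (b i : Fin N → ℝ) k = z :=
    fun i => (Submodule.mem_inf.mp (hmem i)).2
  set A : Matrix (Fin n) (Fin N) ℝ := Matrix.of fun i k => (b i : Fin N → ℝ) k with hA
  have hgoal : (Matrix.of fun i j : Fin n =>
      ∑ k : Fin N, ((b i : Fin N → ℝ) k) * ((b j : Fin N → ℝ) k)) = A * A.transpose := by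
    ext i j
    simp [hA, Matrix.mul_apply, Matrix.transpose_apply]
  rw [hgoal, cauchyBinet]
  have hAk : ∀ i k, A i k = ξ k (u i) := by
    intro i k
    rw [hA]
    show (b i : Fin N → ℝ) k = ξ k (u i)
    rw [← hu i]
    rfl
  -- the key computation for each n-element subset
  have key : ∀ p : {s : Finset (Fin N) // s.card = n},
      (A.submatrix id (menum p)).det * (A.submatrix id (menum p)).det
      = if MaxLinIndep ξ ((p.1 : Set (Fin N))) then (1 : ℝ) else 0 := by
    intro p
    by_cases hind : LinearIndependent ℝ (fun i : ((p.1 : Set (Fin N))) => ξ i)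
    · -- independent: determinant is ±1
      have hmax : MaxLinIndep ξ ((p.1 : Set (Fin N))) := card_indep_maximal hU ξ p.2 hind
      rw [if_pos hmax]
      have hMs : Submodule.span ℤ (ξ '' (p.1 : Set (Fin N))) = M := hgen _ hmax
      -- the order isomorphism as an equivalence
      set e : Fin n ≃ ((p.1 : Set (Fin N))) :=
        ((p.1.orderIsoOfFin p.2).toEquiv.trans (Equiv.refl _)) with he
      rcases Nat.eq_zero_or_pos n with hn0 | hnpos
      · subst hn0
        haveI : IsEmpty (Fin 0) := inferInstance
        rw [Matrix.det_isEmpty]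
        norm_num
      haveI : Nonempty ((p.1 : Set (Fin N))) := ⟨e ⟨0, hnpos⟩⟩
      have hcardco : Fintype.card ((p.1 : Set (Fin N))) = Module.finrank ℝ (Module.Dual ℝ U) := by
        rw [Subspace.dual_finrank_eq, hU]
        exact (Fintype.card_congr e.symm).trans (Fintype.card_fin n)
      set E : Module.Basis ((p.1 : Set (Fin N))) ℝ (Module.Dual ℝ U) :=
        basisOfLinearIndependentOfCardEqFinrank hind hcardco with hE
      have hEapp : ∀ a : ((p.1 : Set (Fin N))), E a = ξ a := by
        intro a
        rw [hE, coe_basisOfLinearIndependentOfCardEqFinrank]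
      -- dual basis vectors in U
      set wB : Module.Basis ((p.1 : Set (Fin N))) ℝ U :=
        E.dualBasis.map (Module.evalEquiv ℝ U).symm with hwB
      set w : ((p.1 : Set (Fin N))) → U := fun k => wB k with hwdef
      have hw : ∀ (a k : ((p.1 : Set (Fin N)))), ξ a (w k) = if a = k then 1 else 0 := by
        intro a k
        have h1 : Module.evalEquiv ℝ U (w k) = E.dualBasis k := by
          show Module.evalEquiv ℝ U ((E.dualBasis.map (Module.evalEquiv ℝ U).symm) k) = _
          rw [Module.Basis.map_apply, LinearEquiv.apply_symm_apply]
        have h2 : ξ (a : Fin N) (w k) = (Module.evalEquiv ℝ U (w k)) (ξ a) := rfl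
        rw [h2, h1, ← hEapp a, Module.Basis.dualBasis_apply_self]
      -- integrality of the dual vectors
      have hwint : ∀ (k : ((p.1 : Set (Fin N)))) (j : Fin N), ∃ z : ℤ, ξ j (w k) = z := by
        intro k j
        have hjM : ξ j ∈ Submodule.span ℤ (ξ '' (p.1 : Set (Fin N))) := by
          rw [hMs]
          exact xi_mem_M ξ M ⟨hne0, hspan, hgen⟩ j
        refine Submodule.span_induction ?_ ?_ ?_ ?_ hjM
        · rintro _ ⟨x, hx, rfl⟩
          refine ⟨if (⟨x, hx⟩ : ((p.1 : Set (Fin N)))) = k then 1 else 0, ?_⟩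
          rw [hw ⟨x, hx⟩ k]
          split <;> simp
        · exact ⟨0, by simp⟩
        · rintro φ ψ _ _ ⟨z1, hz1⟩ ⟨z2, hz2⟩
          exact ⟨z1 + z2, by simp [LinearMap.add_apply, hz1, hz2]⟩
        · rintro a φ _ ⟨z, hz⟩
          refine ⟨a * z, ?_⟩
          have : (a • φ) (w k) = a • (φ (w k)) := rfl
          rw [this, hz, zsmul_eq_mul]
          push_cast
          ring
      -- dual vectors land in the lattice
      have hwL : ∀ k : ((p.1 : Set (Fin N))), PhiMap ξ (w k) ∈
          ((LinearMap.range (PhiMap ξ)).restrictScalars ℤ ⊓ intPts (Fin N) :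
            Submodule ℤ (Fin N → ℝ)) := by
        intro k
        refine Submodule.mem_inf.mpr ⟨⟨w k, rfl⟩, ?_⟩
        intro j
        exact hwint k j
      set Wk : ((p.1 : Set (Fin N))) →
          ((LinearMap.range (PhiMap ξ)).restrictScalars ℤ ⊓ intPts (Fin N) :
            Submodule ℤ (Fin N → ℝ)) := fun k => ⟨PhiMap ξ (w k), hwL k⟩ with hWk
      set c : ((p.1 : Set (Fin N))) → Fin n → ℤ := fun k i => b.repr (Wk k) i with hc
      have hrepr : ∀ k, (∑ i, c k i • b i) = Wk k := fun k => b.sum_repr (Wk k)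
      -- express w in terms of u with integer coefficients
      have hwu : ∀ k, w k = ∑ i, (c k i : ℝ) • u i := by
        intro k
        apply hΦinj
        rw [map_sum]
        have hlhs : PhiMap ξ (w k) = ((Wk k : (Fin N → ℝ))) := rfl
        rw [hlhs, ← hrepr k]
        push_cast
        refine Finset.sum_congr rfl fun i _ => ?_
        rw [_root_.map_smul, hu i]
        exact (Int.cast_smul_eq_zsmul ℝ (c k i) ((b i : Fin N → ℝ))).symm
      -- the two integer matrices
      set Q : Matrix (Fin n) (Fin n) ℝ := A.submatrix id (menum p) with hQ
      have hQapp : ∀ i j, Q i j = ξ ((e j : Fin N)) (u i) := by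
        intro i j
        rw [hQ]
        show A i (menum p j) = _
        rw [hAk]
        rfl
      set C : Matrix (Fin n) (Fin n) ℝ := Matrix.of fun j i => (c (e j) i : ℝ) with hC
      have hCQ : C * Q = 1 := by
        ext j j'
        rw [Matrix.mul_apply]
        have hstep : ∀ i, C j i * Q i j' = (c (e j) i : ℝ) * ξ ((e j' : Fin N)) (u i) := by
          intro i
          rw [hQapp, hC]
          rfl
        simp_rw [hstep]
        have : ∑ i, (c (e j) i : ℝ) * ξ ((e j' : Fin N)) (u i)
            = ξ ((e j' : Fin N)) (w (e j)) := by
          rw [hwu (e j), map_sum]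
          refine Finset.sum_congr rfl fun i _ => ?_
          rw [_root_.map_smul]
          simp [smul_eq_mul]
        rw [this, hw (e j') (e j), Matrix.one_apply]
        by_cases h : j = j'
        · subst h; simp
        · rw [if_neg (fun hh => h (e.injective hh).symm), if_neg h]
      -- integer versions
      choose zq hzq using fun (i j : Fin n) => hint i (menum p j)
      set Qz : Matrix (Fin n) (Fin n) ℤ := Matrix.of zq with hQz
      have hQcast : Qz.map (Int.castRingHom ℝ) = Q := by
        ext i j
        show ((zq i j : ℤ) : ℝ) = A i (menum p j)
        rw [← hzq i j]
        rfl
      set Cz : Matrix (Fin n) (Fin n) ℤ := Matrix.of fun j i => c (e j) i with hCz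
      have hCcast : Cz.map (Int.castRingHom ℝ) = C := by
        ext j i
        rfl
      have hmulz : Cz * Qz = 1 := by
        have hcast : (Cz * Qz).map (Int.castRingHom ℝ) = (1 : Matrix (Fin n) (Fin n) ℤ).map (Int.castRingHom ℝ) := by
          rw [Matrix.map_mul, hQcast, hCcast, hCQ]
          ext i j
          simp [Matrix.one_apply, apply_ite]
        ext i j
        have h2 : ((Cz * Qz) i j : ℝ) = ((1 : Matrix (Fin n) (Fin n) ℤ) i j : ℝ) := by
          have := congrFun (congrFun (congrArg (fun (m : Matrix (Fin n) (Fin n) ℝ) => (m : Fin n → Fin n → ℝ)) hcast) i) j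
          simpa [Matrix.map_apply] using this
        exact_mod_cast h2
      have hdet : Cz.det * Qz.det = 1 := by rw [← Matrix.det_mul, hmulz, Matrix.det_one]
      have hunit : IsUnit Qz.det := IsUnit.of_mul_eq_one _ (by rw [mul_comm]; exact hdet)
      have hQdet : Q.det = ((Qz.det : ℤ) : ℝ) := by
        rw [← hQcast]
        exact (RingHom.map_det (Int.castRingHom ℝ) Qz).symm
      rcases Int.isUnit_iff.mp hunit with h1 | h1 <;>
        rw [hQdet, h1] <;> norm_num
    · -- dependent: determinant is 0
      have hnmax : ¬ MaxLinIndep ξ ((p.1 : Set (Fin N))) := fun h => hind h.1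
      rw [if_neg hnmax]
      set e : Fin n ≃ ((p.1 : Set (Fin N))) := (p.1.orderIsoOfFin p.2).toEquiv with he
      have hind2 : ¬ LinearIndependent ℝ (fun j : Fin n => ξ (menum p j)) := by
        intro h
        exact hind ((linearIndependent_equiv e).mp h)
      obtain ⟨g, hsum, i0, hgi⟩ := Fintype.not_linearIndependent_iff.mp hind2
      have hdet0 : (A.submatrix id (menum p)).det = 0 := by
        rw [← Matrix.exists_mulVec_eq_zero_iff]
        refine ⟨g, fun hgg => hgi (by rw [hgg]; rfl), ?_⟩
        ext i
        have h2 := congrArg (fun φ : Module.Dual ℝ U => φ (u i)) hsum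
        simp only [LinearMap.coe_sum, Finset.sum_apply, LinearMap.smul_apply,
          smul_eq_mul, LinearMap.zero_apply] at h2
        simpa [Matrix.mulVec, dotProduct, hAk, mul_comm] using h2
      rw [hdet0, mul_zero]
  -- counting
  have hsum : ∑ p : {s : Finset (Fin N) // s.card = n},
      (A.submatrix id (menum p)).det * (A.submatrix id (menum p)).det
      = ∑ p : {s : Finset (Fin N) // s.card = n},
        (if MaxLinIndep ξ ((p.1 : Set (Fin N))) then (1 : ℝ) else 0) :=
    Finset.sum_congr rfl fun p _ => key p
  have eqv : {S : Set (Fin N) // MaxLinIndep ξ S} ≃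
      {p : {s : Finset (Fin N) // s.card = n} // MaxLinIndep ξ ((p.1 : Set (Fin N)))} :=
    { toFun := fun S => ⟨⟨(Set.toFinite S.1).toFinset, by
          rw [← Set.ncard_eq_toFinset_card S.1 (Set.toFinite S.1)]
          exact maximal_ncard hU ξ hspan S.2⟩, by
          show MaxLinIndep ξ (((Set.toFinite S.1).toFinset : Set (Fin N)))
          rw [Set.Finite.coe_toFinset]
          exact S.2⟩
      invFun := fun p => ⟨((p.1.1 : Set (Fin N))), p.2⟩
      left_inv := fun S => Subtype.ext (Set.Finite.coe_toFinset _)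
      right_inv := fun p => Subtype.ext (Subtype.ext (by
        ext x
        simp only [Set.Finite.mem_toFinset]
        exact Iff.rfl)) }
  have hcount : {S : Set (Fin N) | MaxLinIndep ξ S}.ncard
      = (Finset.univ.filter (fun p : {s : Finset (Fin N) // s.card = n} =>
          MaxLinIndep ξ ((p.1 : Set (Fin N))))).card := by
    rw [← Nat.card_coe_set_eq, ← Fintype.card_subtype, Nat.card_eq_fintype_card]
    exact Fintype.card_congr eqv
  rw [hsum, Finset.sum_boole, hcount]
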